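/- Define d(X_α, X_β) = inf Σ_{n=1}^N J(X_{n−1}, X_n) over all finite sequences {X_n}_{n=0}^N ⊂ F₀ with X₀ = X_α, X_N = X_β, where J(X_α,X_β) = inf_{f₁,f₂∈G}(‖X_α∘f₁ − X_β‖ + ‖X_α − X_β∘f₂‖). Then (1/2)‖X_α − X_β‖_{L^∞} ≤ d(X_α, X_β) ≤ 2‖X_α − X_β‖. -/

import Mathlib

open MeasureTheory
open scoped ENNReal NNReal

/-- A tuple of Lagrangian coordinates `X = (y, U, H, r)`. -/
structure LagTuple where
  y : ℝ → ℝ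
  U : ℝ → ℝ
  H : ℝ → ℝ
  r : ℝ → ℝ

/-- Relabeling action: `X∘f = (y∘f, U∘f, H∘f, (r∘f)·f_ξ)`. -/
noncomputable def LagTuple.comp (X : LagTuple) (f : ℝ → ℝ) : LagTuple :=
  ⟨X.y ∘ f, X.U ∘ f, X.H ∘ f, fun ξ => X.r (f ξ) * deriv f ξ⟩

/-- Membership in the relabeling group `G`. -/
def InG (f : Homeomorph ℝ ℝ) : Prop :=
  (∃ C : ℝ, ∀ x, |f x - x| ≤ C) ∧
  (∃ L : NNReal, LipschitzWith L (fun x => f x - x)) ∧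
  (∃ C : ℝ, ∀ x, |f.symm x - x| ≤ C) ∧
  (∃ L : NNReal, LipschitzWith L (fun x => f.symm x - x)) ∧
  MemLp (fun x => deriv f x - 1) 2 (volume : Measure ℝ)

/-- The `L^∞`-type distance `‖X - Y‖_{L^∞}`, with the identity subtracted in
the `y`-component. -/
noncomputable def LinfDist (X Y : LagTuple) : ℝ≥0∞ :=
  (⨆ ξ : ℝ, (‖X.y ξ - Y.y ξ‖₊ : ℝ≥0∞)) +
    (⨆ ξ : ℝ, (‖X.U ξ - Y.U ξ‖₊ : ℝ≥0∞)) +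
    ⨆ ξ : ℝ, (‖X.H ξ - Y.H ξ‖₊ : ℝ≥0∞)

/-- The `E`-norm distance `‖X - Y‖_E = ‖ζ‖_V + ‖U‖_{H¹} + ‖H‖_V + ‖r‖_{L²}`
of the difference. -/
noncomputable def ELagDist (X Y : LagTuple) : ℝ≥0∞ :=
  LinfDist X Y +
    eLpNorm (fun ξ => deriv X.y ξ - deriv Y.y ξ) 2 (volume : Measure ℝ) +
    eLpNorm (fun ξ => X.U ξ - Y.U ξ) 2 (volume : Measure ℝ) +
    eLpNorm (fun ξ => deriv X.U ξ - deriv Y.U ξ) 2 (volume : Measure ℝ) +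
    eLpNorm (fun ξ => deriv X.H ξ - deriv Y.H ξ) 2 (volume : Measure ℝ) +
    eLpNorm (fun ξ => X.r ξ - Y.r ξ) 2 (volume : Measure ℝ)

/-- `J(X_α,X_β) = inf_{f₁,f₂ ∈ G} (‖X_α∘f₁ - X_β‖ + ‖X_α - X_β∘f₂‖)`. -/
noncomputable def Jdist (Xα Xβ : LagTuple) : ℝ≥0∞ :=
  ⨅ (f₁ : Homeomorph ℝ ℝ) (_ : InG f₁) (f₂ : Homeomorph ℝ ℝ) (_ : InG f₂),
    (ELagDist (Xα.comp f₁) Xβ + ELagDist Xα (Xβ.comp f₂))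

/-- Membership in the section `F₀`: `y + H = id`, `0 ≤ y_ξ, H_ξ ≤ 1`,
`|U_ξ| ≤ 1` and the energy identity hold. -/
def InF0 (X : LagTuple) : Prop :=
  (∀ ξ, X.y ξ + X.H ξ = ξ) ∧
  LipschitzWith 1 X.y ∧ LipschitzWith 1 X.U ∧ LipschitzWith 1 X.H ∧
  (∀ᵐ ξ : ℝ, 0 ≤ deriv X.y ξ ∧ deriv X.y ξ ≤ 1) ∧
  (∀ᵐ ξ : ℝ, 0 ≤ deriv X.H ξ ∧ deriv X.H ξ ≤ 1) ∧
  (∀ᵐ ξ : ℝ, |deriv X.U ξ| ≤ 1) ∧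
  ∀ᵐ ξ : ℝ, deriv X.y ξ * deriv X.H ξ =
    (deriv X.y ξ)^2 * (X.U ξ)^2 + (deriv X.U ξ)^2 + (X.r ξ)^2

/-- The chain distance `d(X_α,X_β) = inf Σ J(X_{n-1},X_n)` over finite
sequences in `F₀` joining `X_α` to `X_β`. -/
noncomputable def chainDist (Xα Xβ : LagTuple) : ℝ≥0∞ :=
  ⨅ (N : ℕ) (Xs : ℕ → LagTuple) (_ : Xs 0 = Xα) (_ : Xs N = Xβ)
    (_ : ∀ n ≤ N, InF0 (Xs n)) (_ : 0 < N),
    ∑ n ∈ Finset.range N, Jdist (Xs n) (Xs (n + 1))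

section Aux

/-- edist form of one supremum term. -/
private lemma sup_eq_edist (g h : ℝ → ℝ) :
    (⨆ ξ : ℝ, (‖g ξ - h ξ‖₊ : ℝ≥0∞)) = ⨆ ξ : ℝ, edist (g ξ) (h ξ) := by
  simp only [edist_eq_enorm_sub, enorm_eq_nnnorm]

private lemma half_iff {a b : ℝ≥0∞} : a / 2 ≤ b ↔ a ≤ 2 * b :=
  ENNReal.div_le_iff' (by norm_num) (by norm_num)

private lemma LinfDist_symm (X Y : LagTuple) : LinfDist X Y = LinfDist Y X := by
  unfold LinfDist
  rw [sup_eq_edist, sup_eq_edist, sup_eq_edist, sup_eq_edist, sup_eq_edist, sup_eq_edist]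
  simp [edist_comm]

private lemma LinfDist_self (X : LagTuple) : LinfDist X X = 0 := by
  simp [LinfDist]

private lemma LinfDist_triangle (X Y Z : LagTuple) :
    LinfDist X Z ≤ LinfDist X Y + LinfDist Y Z := by
  unfold LinfDist
  simp only [sup_eq_edist]
  have key : ∀ u v w : ℝ → ℝ, (⨆ ξ : ℝ, edist (u ξ) (w ξ)) ≤
      (⨆ ξ : ℝ, edist (u ξ) (v ξ)) + ⨆ ξ : ℝ, edist (v ξ) (w ξ) := by
    intro u v w
    refine iSup_le fun ξ => (edist_triangle _ (v ξ) _).trans ?_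
    exact add_le_add (le_iSup (fun ξ => edist (u ξ) (v ξ)) ξ)
      (le_iSup (fun ξ => edist (v ξ) (w ξ)) ξ)
  calc (⨆ ξ : ℝ, edist (X.y ξ) (Z.y ξ)) + (⨆ ξ : ℝ, edist (X.U ξ) (Z.U ξ)) +
        ⨆ ξ : ℝ, edist (X.H ξ) (Z.H ξ)
      ≤ ((⨆ ξ : ℝ, edist (X.y ξ) (Y.y ξ)) + ⨆ ξ : ℝ, edist (Y.y ξ) (Z.y ξ)) +
        ((⨆ ξ : ℝ, edist (X.U ξ) (Y.U ξ)) + ⨆ ξ : ℝ, edist (Y.U ξ) (Z.U ξ)) +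
        ((⨆ ξ : ℝ, edist (X.H ξ) (Y.H ξ)) + ⨆ ξ : ℝ, edist (Y.H ξ) (Z.H ξ)) :=
        add_le_add (add_le_add (key _ _ _) (key _ _ _)) (key _ _ _)
    _ = _ := by ring

private lemma LinfDist_le_ELagDist (X Y : LagTuple) : LinfDist X Y ≤ ELagDist X Y := by
  unfold ELagDist
  exact le_trans le_self_add (le_trans le_self_add (le_trans le_self_add
    (le_trans le_self_add le_self_add)))

/-- Key lemma: `‖X - Y‖_{L∞} ≤ 4 ‖X∘f - Y‖_{L∞}` for `X, Y ∈ F₀`. -/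
private lemma linf_le_four_comp (X Y : LagTuple) (hX : InF0 X) (hY : InF0 Y)
    (f : ℝ → ℝ) : LinfDist X Y ≤ 4 * LinfDist (X.comp f) Y := by
  obtain ⟨hXid, hXy, hXU, hXH, -⟩ := hX
  obtain ⟨hYid, -⟩ := hY
  set A : ℝ≥0∞ := ⨆ ξ : ℝ, edist (X.y (f ξ)) (Y.y ξ) with hA
  set B : ℝ≥0∞ := ⨆ ξ : ℝ, edist (X.U (f ξ)) (Y.U ξ) with hB
  set C : ℝ≥0∞ := ⨆ ξ : ℝ, edist (X.H (f ξ)) (Y.H ξ) with hC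
  have hLc : LinfDist (X.comp f) Y = A + B + C := by
    unfold LinfDist
    rw [sup_eq_edist, sup_eq_edist, sup_eq_edist]
    rfl
  -- pointwise bound on |f ξ - ξ|
  have hD : ∀ ξ : ℝ, edist (f ξ) ξ ≤ A + C := by
    intro ξ
    have h1 : f ξ - ξ = (X.y (f ξ) - Y.y ξ) + (X.H (f ξ) - Y.H ξ) := by
      have := hXid (f ξ); have := hYid ξ; linarith
    have h2 : edist (f ξ) ξ ≤ edist (X.y (f ξ)) (Y.y ξ) + edist (X.H (f ξ)) (Y.H ξ) := by
      simp only [edist_eq_enorm_sub, enorm_eq_nnnorm]; rw [h1]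
      rw [← ENNReal.coe_add]
      exact_mod_cast nnnorm_add_le _ _
    exact h2.trans (add_le_add (le_iSup (fun ξ => edist (X.y (f ξ)) (Y.y ξ)) ξ)
      (le_iSup (fun ξ => edist (X.H (f ξ)) (Y.H ξ)) ξ))
  have comp_bound : ∀ (g : ℝ → ℝ) (hg : LipschitzWith 1 g) (h : ℝ → ℝ)
      (S : ℝ≥0∞) (hS : ∀ ξ : ℝ, edist (g (f ξ)) (h ξ) ≤ S),
      (⨆ ξ : ℝ, edist (g ξ) (h ξ)) ≤ (A + C) + S := by
    intro g hg h S hS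
    refine iSup_le fun ξ => ?_
    calc edist (g ξ) (h ξ) ≤ edist (g ξ) (g (f ξ)) + edist (g (f ξ)) (h ξ) :=
          edist_triangle _ _ _
      _ ≤ edist ξ (f ξ) + S := by
          refine add_le_add ?_ (hS ξ)
          have := hg.edist_le_mul ξ (f ξ)
          simpa using this
      _ ≤ (A + C) + S := by
          refine add_le_add ?_ le_rfl
          rw [edist_comm]; exact hD ξ
  have hy : (⨆ ξ : ℝ, edist (X.y ξ) (Y.y ξ)) ≤ (A + C) + A :=
    comp_bound X.y hXy Y.y A (fun ξ => le_iSup (fun ξ => edist (X.y (f ξ)) (Y.y ξ)) ξ)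
  have hU : (⨆ ξ : ℝ, edist (X.U ξ) (Y.U ξ)) ≤ (A + C) + B :=
    comp_bound X.U hXU Y.U B (fun ξ => le_iSup (fun ξ => edist (X.U (f ξ)) (Y.U ξ)) ξ)
  have hH : (⨆ ξ : ℝ, edist (X.H ξ) (Y.H ξ)) ≤ (A + C) + C :=
    comp_bound X.H hXH Y.H C (fun ξ => le_iSup (fun ξ => edist (X.H (f ξ)) (Y.H ξ)) ξ)
  have hL : LinfDist X Y = (⨆ ξ : ℝ, edist (X.y ξ) (Y.y ξ)) +
      (⨆ ξ : ℝ, edist (X.U ξ) (Y.U ξ)) + ⨆ ξ : ℝ, edist (X.H ξ) (Y.H ξ) := by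
    unfold LinfDist; rw [sup_eq_edist, sup_eq_edist, sup_eq_edist]
  rw [hL, hLc]
  calc (⨆ ξ : ℝ, edist (X.y ξ) (Y.y ξ)) + (⨆ ξ : ℝ, edist (X.U ξ) (Y.U ξ)) +
        ⨆ ξ : ℝ, edist (X.H ξ) (Y.H ξ)
      ≤ ((A + C) + A) + ((A + C) + B) + ((A + C) + C) :=
        add_le_add (add_le_add hy hU) hH
    _ ≤ 4 * (A + B + C) := by
        have hA4 : (4 : ℝ≥0∞) * (A + B + C) = 4 * A + 4 * B + 4 * C := by ring
        have : ((A + C) + A) + ((A + C) + B) + ((A + C) + C) =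
            4 * A + B + 4 * C + (0 : ℝ≥0∞) := by ring
        rw [this, hA4]
        have hB4 : B ≤ 4 * B := le_mul_of_one_le_left zero_le (by norm_num)
        calc 4 * A + B + 4 * C + 0 = 4 * A + B + 4 * C := by rw [add_zero]
          _ ≤ 4 * A + 4 * B + 4 * C := add_le_add (add_le_add le_rfl hB4) le_rfl
    _ = _ := rfl

private lemma linf_le_four_comp' (X Y : LagTuple) (hX : InF0 X) (hY : InF0 Y)
    (f : ℝ → ℝ) : LinfDist X Y ≤ 4 * LinfDist X (Y.comp f) := by
  rw [LinfDist_symm X Y, LinfDist_symm X (Y.comp f)]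
  exact linf_le_four_comp Y X hY hX f

private lemma linf_le_two_J (X Y : LagTuple) (hX : InF0 X) (hY : InF0 Y) :
    LinfDist X Y ≤ 2 * Jdist X Y := by
  rw [← half_iff]
  refine le_iInf fun f₁ => le_iInf fun hf₁ => le_iInf fun f₂ => le_iInf fun hf₂ => ?_
  rw [half_iff]
  have h1 : LinfDist X Y ≤ 4 * LinfDist (X.comp f₁) Y := linf_le_four_comp X Y hX hY f₁
  have h2 : LinfDist X Y ≤ 4 * LinfDist X (Y.comp f₂) := linf_le_four_comp' X Y hX hY f₂
  have key : 2 * LinfDist X Y ≤ 2 * (2 * (LinfDist (X.comp f₁) Y + LinfDist X (Y.comp f₂))) := by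
    calc 2 * LinfDist X Y = LinfDist X Y + LinfDist X Y := two_mul _
      _ ≤ 4 * LinfDist (X.comp f₁) Y + 4 * LinfDist X (Y.comp f₂) := add_le_add h1 h2
      _ = 2 * (2 * (LinfDist (X.comp f₁) Y + LinfDist X (Y.comp f₂))) := by ring
  have hcancel := (ENNReal.mul_le_mul_iff_right (a := 2) (by norm_num) (by norm_num)).mp key
  refine hcancel.trans ?_
  gcongr
  · exact LinfDist_le_ELagDist _ _
  · exact LinfDist_le_ELagDist _ _

private lemma linf_chain (g : ℕ → LagTuple) : ∀ N : ℕ,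
    LinfDist (g 0) (g N) ≤ ∑ n ∈ Finset.range N, LinfDist (g n) (g (n + 1)) := by
  intro N
  induction N with
  | zero => simp [LinfDist_self]
  | succ N ih =>
    rw [Finset.sum_range_succ]
    exact (LinfDist_triangle (g 0) (g N) (g (N + 1))).trans (add_le_add ih le_rfl)

private lemma InG_refl : InG (Homeomorph.refl ℝ) := by
  refine ⟨⟨0, by simp⟩, ⟨0, ?_⟩, ⟨0, by simp⟩, ⟨0, ?_⟩, ?_⟩
  · have : (fun x : ℝ => (Homeomorph.refl ℝ) x - x) = fun _ => 0 := by
      funext x; simp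
    rw [this]; exact LipschitzWith.const 0
  · have : (fun x : ℝ => (Homeomorph.refl ℝ).symm x - x) = fun _ => 0 := by
      funext x; simp
    rw [this]; exact LipschitzWith.const 0
  · have : (fun x : ℝ => deriv (⇑(Homeomorph.refl ℝ)) x - 1) = fun _ => (0 : ℝ) := by
      funext x
      have h : ⇑(Homeomorph.refl ℝ) = (id : ℝ → ℝ) := rfl
      rw [h, deriv_id]; ring
    rw [this]
    exact MemLp.zero'

private lemma comp_refl (X : LagTuple) : X.comp (⇑(Homeomorph.refl ℝ)) = X := by
  have h : ⇑(Homeomorph.refl ℝ) = (id : ℝ → ℝ) := rfl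
  cases X with
  | mk y U H r =>
    unfold LagTuple.comp
    simp only [h]
    congr 1
    funext ξ
    simp [deriv_id]

end Aux


/-- `(1/2)... -/
theorem chainDist_bounds (Xα Xβ : LagTuple) (hα : InF0 Xα) (hβ : InF0 Xβ) :
    LinfDist Xα Xβ ≤ 2 * chainDist Xα Xβ ∧
      chainDist Xα Xβ ≤ 2 * ELagDist Xα Xβ := by
  constructor
  · -- lower bound
    rw [← half_iff]
    unfold chainDist
    refine le_iInf fun N => le_iInf fun Xs => le_iInf fun h0 => le_iInf fun hN =>
      le_iInf fun hF => le_iInf fun hpos => ?_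
    rw [half_iff]
    have step : ∀ n < N, LinfDist (Xs n) (Xs (n + 1)) ≤ 2 * Jdist (Xs n) (Xs (n + 1)) :=
      fun n hn => linf_le_two_J _ _ (hF n hn.le) (hF (n + 1) hn)
    calc LinfDist Xα Xβ = LinfDist (Xs 0) (Xs N) := by rw [h0, hN]
      _ ≤ ∑ n ∈ Finset.range N, LinfDist (Xs n) (Xs (n + 1)) := linf_chain Xs N
      _ ≤ ∑ n ∈ Finset.range N, 2 * Jdist (Xs n) (Xs (n + 1)) :=
          Finset.sum_le_sum fun n hn => step n (Finset.mem_range.mp hn)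
      _ = 2 * ∑ n ∈ Finset.range N, Jdist (Xs n) (Xs (n + 1)) :=
          (Finset.mul_sum _ _ _).symm
  · -- upper bound
    have hJ : Jdist Xα Xβ ≤ 2 * ELagDist Xα Xβ := by
      unfold Jdist
      refine iInf_le_of_le (Homeomorph.refl ℝ) (iInf_le_of_le InG_refl
        (iInf_le_of_le (Homeomorph.refl ℝ) (iInf_le_of_le InG_refl ?_)))
      rw [comp_refl, comp_refl, two_mul]
    refine le_trans ?_ hJ
    unfold chainDist
    refine iInf_le_of_le 1 (iInf_le_of_le (fun n => if n = 0 then Xα else Xβ)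
      (iInf_le_of_le (by simp) (iInf_le_of_le (by simp)
      (iInf_le_of_le ?_ (iInf_le_of_le one_pos ?_)))))
    · intro n _
      by_cases h : n = 0 <;> simp [h, hα, hβ]
    · simp
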